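/- Let F be a t-intersecting family of subsets of [n] with t ≥ 1, and let 0 < p < 1/(t+1). Then the p-biased measure of F satisfies μ_p(F) ≤ p^t. -/

import Mathlib

open Finset

/-- Partial alternating binomial sum `∑_{i=0}^{K} (-1)^i C(M,i) p^i`. -/
noncomputable def fMK (p : ℝ) (M K : ℕ) : ℝ :=
  ∑ i ∈ range (K + 1), (-1 : ℝ) ^ i * (M.choose i : ℝ) * p ^ i

lemma fMK_zero (p : ℝ) (M : ℕ) : fMK p M 0 = 1 := by
  simp [fMK]

lemma fMK_succ (p : ℝ) (M K : ℕ) :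
    fMK p M (K + 1) = fMK p M K + (-1 : ℝ) ^ (K+1) * (M.choose (K+1) : ℝ) * p ^ (K+1) := by
  rw [fMK, Finset.sum_range_succ]; rfl

lemma fMK_pascal (p : ℝ) (M K : ℕ) :
    fMK p (M + 1) (K + 1) = fMK p M (K + 1) - p * fMK p M K := by
  rw [fMK, Finset.sum_range_succ' (fun i => (-1 : ℝ) ^ i * ((M+1).choose i : ℝ) * p ^ i)]
  have h1 : ∀ i, (-1 : ℝ) ^ (i+1) * (((M+1).choose (i+1) : ℕ) : ℝ) * p ^ (i+1)
      = ((-1 : ℝ) ^ (i+1) * (M.choose (i+1) : ℝ) * p ^ (i+1))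
        + (-p) * ((-1 : ℝ) ^ i * (M.choose i : ℝ) * p ^ i) := by
    intro i
    rw [Nat.choose_succ_succ' M i]
    push_cast
    ring
  rw [Finset.sum_congr rfl (fun i _ => h1 i), Finset.sum_add_distrib, ← Finset.mul_sum]
  have h2 : ∑ i ∈ range (K+1), (-1:ℝ)^(i+1) * (M.choose (i+1) : ℝ) * p^(i+1)
      = fMK p M (K+1) - 1 := by
    rw [fMK, Finset.sum_range_succ' (fun i => (-1 : ℝ) ^ i * (M.choose i : ℝ) * p ^ i)]
    simp
  rw [h2]
  simp [fMK]
  ring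

/-- Key positivity: if `p(M-K+1) ≤ 1` then the alternating partial sum is nonnegative
(with a stronger bound in the even case). -/
lemma fMK_nonneg_strong (p : ℝ) (hp : 0 < p) :
    ∀ K M : ℕ, K < M → p * ((M : ℝ) - K + 1) ≤ 1 →
      (if Even K then ((M-1).choose K : ℝ) * p ^ K else 0) ≤ fMK p M K := by
  intro K
  induction K with
  | zero =>
    intro M _ _
    simp [fMK_zero]
  | succ K ih =>
    intro M hKM hcond
    obtain ⟨N, rfl⟩ : ∃ N, M = N + 1 := ⟨M - 1, by omega⟩
    have hKN : K < N := by omega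
    have hcond' : p * ((N : ℝ) - K + 1) ≤ 1 := by
      push_cast at hcond
      have : p * (↑N + 1 - (↑K + 1) + 1) = p * ((N:ℝ) - K + 1) := by ring
      linarith [this ▸ hcond]
    have hIH := ih N hKN hcond'
    have hp1 : p ≤ 1 / 2 := by
      have h2 : (2:ℝ) ≤ ((N:ℝ)+1) - (K+1) + 1 := by
        have : (1:ℝ) ≤ (N:ℝ) - K := by
          have : (K:ℝ) + 1 ≤ N := by exact_mod_cast hKN
          linarith
        push_cast; linarith
      nlinarith
    rw [fMK_pascal, fMK_succ]
    by_cases hK : Even K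
    · -- K even, K+1 odd: goal `0 ≤ ...`
      rw [if_neg (by simp [Nat.even_add_one, hK])]
      rw [if_pos hK] at hIH
      have hsign : (-1:ℝ)^(K+1) = -1 := Odd.neg_one_pow (by simpa [Nat.odd_add_one] using hK)
      rw [hsign]
      obtain ⟨n, rfl⟩ : ∃ n, N = n + 1 := ⟨N - 1, by omega⟩
      have hKn : K ≤ n := by omega
      have hch : ((n + 1 - 1).choose K : ℝ) = (n.choose K : ℝ) := by norm_num
      rw [hch] at hIH
      have ha : (0:ℝ) ≤ (n.choose K : ℝ) := Nat.cast_nonneg _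
      have hb : (0:ℝ) ≤ ((n+1).choose (K+1) : ℝ) := Nat.cast_nonneg _
      have hmc' : ((K:ℝ)+1) * ((n+1).choose (K+1) : ℝ) = ((n:ℝ)+1) * (n.choose K : ℝ) := by
        have h : (n + 1) * n.choose K = (n + 1).choose (K + 1) * (K + 1) := by
          simpa [Nat.succ_eq_add_one] using Nat.add_one_mul_choose_eq n K
        have h2 := congrArg (fun z : ℕ => (z:ℝ)) h
        push_cast at h2
        linarith
      have hcond'' : p * ((n:ℝ) - K + 2) ≤ 1 := by
        push_cast at hcond'; linarith [hcond']
      have hnK : (K:ℝ) ≤ (n:ℝ) := by exact_mod_cast hKn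
      have e1 : ((K:ℝ)+1) * (p * ((n:ℝ) - K + 2)) ≤ ((K:ℝ)+1) * 1 :=
        mul_le_mul_of_nonneg_left hcond'' (by positivity)
      have e2 : 0 ≤ p * K * ((n:ℝ) - K) :=
        mul_nonneg (mul_nonneg hp.le (Nat.cast_nonneg K)) (by linarith)
      have h1 : p * ((n:ℝ) + K + 2) ≤ (K:ℝ) + 1 := by nlinarith [e1, e2]
      have h2 : ((K:ℝ)+1)*((1-p)*(n.choose K : ℝ) - p*((n+1).choose (K+1) : ℝ))
          = (n.choose K : ℝ)*(((K:ℝ)+1) - p*((n:ℝ)+K+2)) := by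
        linear_combination (-p) * hmc'
      have hX : 0 ≤ ((K:ℝ)+1)*((1-p)*(n.choose K : ℝ) - p*((n+1).choose (K+1) : ℝ)) := by
        rw [h2]; exact mul_nonneg ha (by linarith)
      have hkey : 0 ≤ (1-p)*(n.choose K : ℝ) - p*((n+1).choose (K+1) : ℝ) :=
        (mul_nonneg_iff_of_pos_left (show (0:ℝ) < (K:ℝ)+1 by positivity)).mp hX
      have hstep : (1-p)*((n.choose K : ℝ) * p^K) ≤ (1-p) * fMK p (n+1) K :=
        mul_le_mul_of_nonneg_left hIH (by linarith)
      have goal' : p^(K+1)*(((n+1).choose (K+1)) : ℝ) ≤ (1-p)*fMK p (n+1) K := by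
        calc p^(K+1)*(((n+1).choose (K+1)) : ℝ) = p^K*(p*(((n+1).choose (K+1)) : ℝ)) := by ring
        _ ≤ p^K*((1-p)*(n.choose K : ℝ)) :=
            mul_le_mul_of_nonneg_left (by linarith) (pow_nonneg hp.le K)
        _ = (1-p)*((n.choose K : ℝ) * p^K) := by ring
        _ ≤ (1-p)*fMK p (n+1) K := hstep
      linarith [goal']
    · -- K odd, K+1 even
      rw [if_pos (by simpa [Nat.even_add_one] using hK)]
      rw [if_neg hK] at hIH
      have hsign : (-1:ℝ)^(K+1) = 1 :=
        Even.neg_one_pow (by simpa [Nat.even_add_one] using hK)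
      rw [hsign]
      have hple : p ≤ 1 := by linarith
      have hnn : (0:ℝ) ≤ (1 - p) * fMK p N K := mul_nonneg (by linarith) hIH
      have hch : ((N + 1 - 1).choose (K+1) : ℝ) = (N.choose (K+1) : ℝ) := by norm_num
      rw [hch]
      linarith [hnn]

/-- Eigenvalue `λ_m`. -/
noncomputable def lamt (p : ℝ) (t m : ℕ) : ℝ :=
  ∑ j ∈ range t, (-(p/(1-p)))^j * (1-p^(t-j))/(1-p^t) *
    ((-1:ℝ)^m * (m.choose j : ℝ) * (p/(1-p))^(m-j))

lemma lamt_zero (p : ℝ) (t : ℕ) (ht : 1 ≤ t) (hpt : p^t ≠ 1) : lamt p t 0 = 1 := by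
  rw [lamt, Finset.sum_eq_single_of_mem 0 (Finset.mem_range.mpr (by omega))]
  · simp only [Nat.sub_zero, Nat.choose_self, Nat.cast_one, pow_zero, neg_zero]
    norm_num
    exact sub_ne_zero.mpr (Ne.symm hpt)
  · intro j _ hj
    simp [Nat.choose_eq_zero_of_lt (Nat.pos_of_ne_zero hj)]

lemma pascal_sum (g : ℕ → ℝ) (m t : ℕ) :
    ∑ j ∈ range (t+1), (-1:ℝ)^j * ((m+1).choose j : ℝ) * g j
    = (∑ j ∈ range (t+1), (-1:ℝ)^j * (m.choose j : ℝ) * g j)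
      - ∑ j ∈ range t, (-1:ℝ)^j * (m.choose j : ℝ) * g (j+1) := by
  rw [Finset.sum_range_succ' (fun j => (-1:ℝ)^j * ((m+1).choose j : ℝ) * g j)]
  rw [Finset.sum_range_succ' (fun j => (-1:ℝ)^j * (m.choose j : ℝ) * g j)]
  have hterm : ∀ j, (-1:ℝ)^(j+1) * ((m+1).choose (j+1) : ℝ) * g (j+1)
      = ((-1:ℝ)^(j+1) * (m.choose (j+1) : ℝ) * g (j+1))
        - (-1:ℝ)^j * (m.choose j : ℝ) * g (j+1) := by
    intro j
    rw [Nat.choose_succ_succ m j]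
    push_cast
    ring
  rw [Finset.sum_congr rfl fun j _ => hterm j, Finset.sum_sub_distrib]
  simp [Nat.choose_zero_right]
  ring

lemma keyId (p : ℝ) (t m : ℕ) (ht : 1 ≤ t) (hm : 1 ≤ m) :
    ∑ j ∈ range t, (-1:ℝ)^j * (m.choose j : ℝ) * (1 - p^(t-j))
    = (1-p) * ∑ j ∈ range t, (-1:ℝ)^j * ((m-1).choose j : ℝ) * p^(t-1-j) := by
  obtain ⟨t', rfl⟩ : ∃ t', t = t'+1 := ⟨t-1, by omega⟩
  obtain ⟨m', rfl⟩ : ∃ m', m = m'+1 := ⟨m-1, by omega⟩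
  rw [pascal_sum (fun j => 1 - p^(t'+1-j)) m' t']
  simp only [Nat.add_sub_cancel]
  rw [Finset.sum_range_succ (fun j => (-1:ℝ)^j * (m'.choose j : ℝ) * (1 - p^(t'+1-j)))]
  rw [Finset.sum_range_succ (fun j => (-1:ℝ)^j * (m'.choose j : ℝ) * p^(t'-j))]
  have h1 : ∀ j ∈ range t',
      ((-1:ℝ)^j * (m'.choose j : ℝ) * (1 - p^(t'+1-j))) -
        ((-1:ℝ)^j * (m'.choose j : ℝ) * (1 - p^(t'+1-(j+1))))
      = (1-p) * ((-1:ℝ)^j * (m'.choose j : ℝ) * p^(t'-j)) - 0 := by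
    intro j hj
    rw [Finset.mem_range] at hj
    have e1 : t'+1-j = (t'-j)+1 := by omega
    have e2 : t'+1-(j+1) = t'-j := by omega
    have e3 : t'-j+1 = t'+1-j := by omega
    rw [e1, e2, pow_succ]
    ring
  have hsplit :
      (∑ j ∈ range t', (-1:ℝ)^j * (m'.choose j : ℝ) * (1 - p^(t'+1-j)))
        - ∑ j ∈ range t', (-1:ℝ)^j * (m'.choose j : ℝ) * (1 - p^(t'+1-(j+1)))
      = (1-p) * ∑ j ∈ range t', (-1:ℝ)^j * (m'.choose j : ℝ) * p^(t'-j) := by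
    rw [← Finset.sum_sub_distrib, Finset.mul_sum]
    rw [Finset.sum_congr rfl h1]
    simp
  have e4 : t'+1-t' = 1 := by omega
  have e5 : t'-t' = 0 := by omega
  rw [e4, e5]
  rw [mul_add]
  rw [← hsplit]
  ring

lemma V_full (p : ℝ) (M : ℕ) :
    ∑ j ∈ range (M+1), (-1:ℝ)^j * (M.choose j : ℝ) * (p⁻¹)^j = (1 - p⁻¹)^M := by
  have h2 : (1 - p⁻¹ : ℝ) = -p⁻¹ + 1 := by ring
  rw [h2, add_pow]
  apply Finset.sum_congr rfl
  intro j _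
  rw [neg_pow]
  ring

lemma V_small (p : ℝ) (t M : ℕ) (hMt : M < t) :
    ∑ j ∈ range t, (-1:ℝ)^j * (M.choose j : ℝ) * (p⁻¹)^j = (1 - p⁻¹)^M := by
  rw [← V_full p M]
  symm
  apply Finset.sum_subset (Finset.range_subset_range.mpr (show M+1 ≤ t by omega))
  intro j _ hj
  rw [Finset.mem_range] at hj
  push_neg at hj
  simp [Nat.choose_eq_zero_of_lt (by omega : M < j)]

lemma tail_reflect (p : ℝ) (hp : p ≠ 0) (M t : ℕ) (ht : t ≤ M) :
    ∑ j ∈ Finset.Ico t (M+1), (-1:ℝ)^j * (M.choose j : ℝ) * (p⁻¹)^j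
    = (-1:ℝ)^M * (p⁻¹)^M * fMK p M (M-t) := by
  rw [fMK, Finset.mul_sum]
  apply Finset.sum_nbij' (i := fun j => M - j) (j := fun i => M - i)
  · intro a ha
    simp only [Finset.mem_Ico] at ha
    simp only [Finset.mem_range]
    omega
  · intro a ha
    simp only [Finset.mem_range] at ha
    simp only [Finset.mem_Ico]
    omega
  · intro a ha
    simp only [Finset.mem_Ico] at ha
    omega
  · intro a ha
    simp only [Finset.mem_range] at ha
    omega
  · intro j hj
    rw [Finset.mem_Ico] at hj
    have hjM : j ≤ M := by omega
    have h1 : M.choose (M - j) = M.choose j := Nat.choose_symm hjM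
    have h2 : (-1:ℝ)^(M-j) * (-1:ℝ)^j = (-1:ℝ)^M := by
      rw [← pow_add]; congr 1; omega
    have h3 : (p⁻¹)^(M-j) * (p⁻¹)^j = (p⁻¹)^M := by
      rw [← pow_add]; congr 1; omega
    have h4 : (p⁻¹)^j * p^j = 1 := by
      rw [← mul_pow, inv_mul_cancel₀ hp, one_pow]
    symm
    rw [h1]
    calc (-1:ℝ)^M * (p⁻¹)^M * ((-1:ℝ)^(M-j) * (M.choose j : ℝ) * p^(M-j))
        = ((-1:ℝ)^M * (-1:ℝ)^(M-j)) * ((p⁻¹)^M * p^(M-j)) * (M.choose j : ℝ) := by ring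
      _ = (-1:ℝ)^j * (M.choose j : ℝ) * (p⁻¹)^j := by
          have hA : (-1:ℝ)^M * (-1:ℝ)^(M-j) = (-1:ℝ)^j := by
            have : ((-1:ℝ)^(M-j) * (-1:ℝ)^j) * (-1:ℝ)^(M-j) = (-1:ℝ)^j * ((-1)^(M-j)*(-1)^(M-j)) := by ring
            have hsq : (-1:ℝ)^(M-j) * (-1:ℝ)^(M-j) = 1 := by
              rw [← pow_add]; exact Even.neg_one_pow ⟨M-j, rfl⟩
            calc (-1:ℝ)^M * (-1:ℝ)^(M-j) = ((-1:ℝ)^(M-j) * (-1:ℝ)^j) * (-1:ℝ)^(M-j) := by rw [h2]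
              _ = (-1:ℝ)^j * ((-1:ℝ)^(M-j)*(-1:ℝ)^(M-j)) := by ring
              _ = (-1:ℝ)^j := by rw [hsq, mul_one]
          have hB : (p⁻¹)^M * p^(M-j) = (p⁻¹)^j := by
            calc (p⁻¹)^M * p^(M-j) = ((p⁻¹)^(M-j) * (p⁻¹)^j) * p^(M-j) := by rw [h3]
              _ = (p⁻¹)^j * ((p⁻¹)^(M-j) * p^(M-j)) := by ring
              _ = (p⁻¹)^j := by
                  rw [← mul_pow, inv_mul_cancel₀ hp, one_pow, mul_one]
          rw [hA, hB]; ring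

lemma lam_eq (p : ℝ) (t m : ℕ) (ht : 1 ≤ t) (hm : 1 ≤ m) (hp : 0 < p) (hp1 : p < 1)
    (hptne : p^t ≠ 1) :
    lamt p t m = (p^t/(1-p^t)) * ((-1:ℝ)^m * (p/(1-p))^(m-1) *
      ∑ j ∈ range t, (-1:ℝ)^j * ((m-1).choose j : ℝ) * (p⁻¹)^j) := by
  have hq0 : (1:ℝ) - p ≠ 0 := by linarith
  have hpne : p ≠ 0 := hp.ne'
  have step1 : lamt p t m = ((-1:ℝ)^m * (p/(1-p))^m / (1-p^t)) *
      ∑ j ∈ range t, (-1:ℝ)^j * (m.choose j : ℝ) * (1 - p^(t-j)) := by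
    rw [lamt, Finset.mul_sum]
    apply Finset.sum_congr rfl
    intro j _
    rcases le_or_gt j m with h | h
    · have hmm : (p/(1-p))^j * (p/(1-p))^(m-j) = (p/(1-p))^m := by
        rw [← pow_add]; congr 1; omega
      rw [neg_pow, ← hmm]
      ring
    · simp [Nat.choose_eq_zero_of_lt h]
  have step2 : ∑ j ∈ range t, (-1:ℝ)^j * ((m-1).choose j : ℝ) * p^(t-1-j)
      = p^(t-1) * ∑ j ∈ range t, (-1:ℝ)^j * ((m-1).choose j : ℝ) * (p⁻¹)^j := by
    rw [Finset.mul_sum]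
    apply Finset.sum_congr rfl
    intro j hj
    rw [Finset.mem_range] at hj
    have hpow : p^(t-1-j) = p^(t-1) * (p⁻¹)^j := by
      rw [inv_pow, eq_mul_inv_iff_mul_eq₀ (pow_ne_zero j hpne), ← pow_add]
      congr 1; omega
    rw [hpow]; ring
  rw [step1, keyId p t m ht hm, step2]
  have hqm : (p/(1-p))^m = (p/(1-p))^(m-1) * (p/(1-p)) := by
    rw [← pow_succ]; congr 1; omega
  have hptm : (p:ℝ)^t = p^(t-1) * p := by
    rw [← pow_succ]; congr 1; omega
  have hqp : (p/(1-p)) * (1-p) = p := div_mul_cancel₀ p hq0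
  rw [hqm]
  linear_combination ((-1:ℝ)^m * (p/(1-p))^(m-1) *
      (∑ j ∈ range t, (-1:ℝ)^j * ((m-1).choose j : ℝ) * (p⁻¹)^j) / (1-p^t)) * p^(t-1) * hqp
    - ((-1:ℝ)^m * (p/(1-p))^(m-1) *
      (∑ j ∈ range t, (-1:ℝ)^j * ((m-1).choose j : ℝ) * (p⁻¹)^j) / (1-p^t)) * hptm

lemma neg_pow_succ_mul (M : ℕ) : ((-1:ℝ))^(M+1) * (-1:ℝ)^M = -1 := by
  rw [← pow_add]
  exact Odd.neg_one_pow ⟨M, by omega⟩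

lemma lamt_ge (p : ℝ) (t : ℕ) (ht : 1 ≤ t) (hp : 0 < p) (hcond : p * ((t:ℝ)+1) ≤ 1)
    (m : ℕ) (hm : 1 ≤ m) : -(p^t/(1-p^t)) ≤ lamt p t m := by
  have htr : (1:ℝ) ≤ (t:ℝ) := by exact_mod_cast ht
  have hp1 : p < 1 := by nlinarith
  have hq0 : (0:ℝ) < 1 - p := by linarith
  have hptlt : p^t < 1 := pow_lt_one₀ hp.le hp1 (by omega)
  have hptpos : 0 < p^t := pow_pos hp t
  have hc : 0 < p^t/(1-p^t) := div_pos hptpos (by linarith)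
  have hqv : (p/(1-p)) * (1-p⁻¹) = -1 := by
    field_simp
    ring
  have hqpow : ∀ M : ℕ, (p/(1-p))^M * (1-p⁻¹)^M = (-1:ℝ)^M := by
    intro M; rw [← mul_pow, hqv]
  rw [lam_eq p t m ht hm hp hp1 (ne_of_lt hptlt)]
  obtain ⟨M, rfl⟩ : ∃ M, m = M + 1 := ⟨m-1, by omega⟩
  simp only [Nat.add_sub_cancel]
  rcases lt_or_ge M t with hMt | hMt
  · rw [V_small p t M hMt]
    have : ((-1:ℝ))^(M+1) * (p/(1-p))^M * (1-p⁻¹)^M = -1 := by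
      rw [mul_assoc, hqpow M, neg_pow_succ_mul]
    rw [this]
    simp
  · -- t ≤ M
    have hsplit : (∑ j ∈ range t, (-1:ℝ)^j * (M.choose j : ℝ) * (p⁻¹)^j)
        + ∑ j ∈ Finset.Ico t (M+1), (-1:ℝ)^j * (M.choose j : ℝ) * (p⁻¹)^j
        = (1-p⁻¹)^M := by
      rw [← V_full p M]
      simp only [Finset.range_eq_Ico]
      exact Finset.sum_Ico_consecutive _ (Nat.zero_le t) (by omega)
    have hfnn : 0 ≤ fMK p M (M-t) := by
      have hlt : M - t < M := by omega
      have hcast : p * ((M:ℝ) - ((M-t : ℕ):ℝ) + 1) ≤ 1 := by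
        have : ((M-t : ℕ):ℝ) = (M:ℝ) - (t:ℝ) := by
          rw [Nat.cast_sub hMt]
        rw [this]
        calc p * ((M:ℝ) - ((M:ℝ) - t) + 1) = p * ((t:ℝ)+1) := by ring_nf
          _ ≤ 1 := hcond
      have h := fMK_nonneg_strong p hp (M-t) M hlt hcast
      rcases em (Even (M-t)) with he | he
      · rw [if_pos he] at h; exact le_trans (by positivity) h
      · rwa [if_neg he] at h
    rw [tail_reflect p hp.ne' M t hMt] at hsplit
    have hV : (∑ j ∈ range t, (-1:ℝ)^j * (M.choose j : ℝ) * (p⁻¹)^j)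
        = (1-p⁻¹)^M - (-1:ℝ)^M * (p⁻¹)^M * fMK p M (M-t) := by linarith [hsplit]
    rw [hV]
    have hA : ((-1:ℝ))^(M+1) * (p/(1-p))^M * (1-p⁻¹)^M = -1 := by
      rw [mul_assoc, hqpow M, neg_pow_succ_mul]
    have hB : ((-1:ℝ))^(M+1) * (p/(1-p))^M * ((-1:ℝ)^M * (p⁻¹)^M * fMK p M (M-t))
        = -(((p/(1-p)) * p⁻¹)^M * fMK p M (M-t)) := by
      rw [mul_pow]
      calc ((-1:ℝ))^(M+1) * (p/(1-p))^M * ((-1:ℝ)^M * (p⁻¹)^M * fMK p M (M-t))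
          = (((-1:ℝ))^(M+1) * (-1:ℝ)^M) * ((p/(1-p))^M * (p⁻¹)^M * fMK p M (M-t)) := by ring
        _ = -(((p/(1-p)))^M * (p⁻¹)^M * fMK p M (M-t)) := by rw [neg_pow_succ_mul]; ring
    have hexp : ((-1:ℝ))^(M+1) * (p/(1-p))^M *
        ((1-p⁻¹)^M - (-1:ℝ)^M * (p⁻¹)^M * fMK p M (M-t))
        = -1 + ((p/(1-p)) * p⁻¹)^M * fMK p M (M-t) := by
      rw [mul_sub, hA, hB]; ring
    rw [hexp]
    have hnn : 0 ≤ ((p/(1-p)) * p⁻¹)^M * fMK p M (M-t) := by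
      apply mul_nonneg _ hfnn
      positivity
    nlinarith [hc, hnn]
open Polynomial in
noncomputable def PhiP (p : ℝ) {n : ℕ} (ee : Fin n → ℝ) : Polynomial ℝ :=
  ∏ i : Fin n, (1 + Polynomial.C (ee i) * (-(Polynomial.C (p/(1-p))) - Polynomial.X))

/-- Expansion of `PhiP` over subsets. -/
lemma PhiP_expand (p : ℝ) {n : ℕ} (ee : Fin n → ℝ) :
    PhiP p ee = ∑ S ∈ (Finset.univ : Finset (Fin n)).powerset,
      Polynomial.C (∏ i ∈ S, ee i) *
        (-(Polynomial.C (p/(1-p))) - Polynomial.X)^S.card := by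
  rw [PhiP]
  have h1 : ∀ i ∈ (Finset.univ : Finset (Fin n)),
      (1 + Polynomial.C (ee i) * (-(Polynomial.C (p/(1-p))) - Polynomial.X))
      = (Polynomial.C (ee i) * (-(Polynomial.C (p/(1-p))) - Polynomial.X)) + 1 := by
    intro i _; ring
  rw [Finset.prod_congr rfl h1, Finset.prod_add]
  apply Finset.sum_congr rfl
  intro S _
  rw [Finset.prod_const_one, mul_one, Finset.prod_mul_distrib, Finset.prod_const, map_prod]

lemma coeff_Y_pow (p : ℝ) (m j : ℕ) :
    ((-(Polynomial.C (p/(1-p))) - Polynomial.X)^m).coeff j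
      = (-1:ℝ)^m * ((m.choose j : ℝ) * (p/(1-p))^(m-j)) := by
  have h1 : (-(Polynomial.C (p/(1-p))) - Polynomial.X)
      = -(Polynomial.X + Polynomial.C (p/(1-p))) := by ring
  rw [h1, neg_pow]
  have h2 : ((-1 : Polynomial ℝ))^m = Polynomial.C ((-1:ℝ)^m) := by
    rw [map_pow, map_neg, map_one]
  rw [h2, Polynomial.coeff_C_mul, Polynomial.coeff_X_add_C_pow]
  ring

/-- The functional `L`. -/
noncomputable def Lfun (p : ℝ) (t : ℕ) (f : Polynomial ℝ) : ℝ :=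
  ∑ j ∈ Finset.range t, (-(p/(1-p)))^j * (1-p^(t-j))/(1-p^t) * f.coeff j

lemma Lfun_PhiP (p : ℝ) (t : ℕ) {n : ℕ} (ee : Fin n → ℝ) :
    Lfun p t (PhiP p ee) = ∑ S ∈ (Finset.univ : Finset (Fin n)).powerset,
      lamt p t S.card * ∏ i ∈ S, ee i := by
  rw [Lfun, PhiP_expand]
  have h1 : ∀ j, (∑ S ∈ (Finset.univ : Finset (Fin n)).powerset,
      Polynomial.C (∏ i ∈ S, ee i) *
        (-(Polynomial.C (p/(1-p))) - Polynomial.X)^S.card).coeff j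
      = ∑ S ∈ (Finset.univ : Finset (Fin n)).powerset,
        (∏ i ∈ S, ee i) * ((-1:ℝ)^S.card * ((S.card.choose j : ℝ) * (p/(1-p))^(S.card-j))) := by
    intro j
    rw [Polynomial.finset_sum_coeff]
    apply Finset.sum_congr rfl
    intro S _
    rw [Polynomial.coeff_C_mul, coeff_Y_pow]
  simp_rw [h1, Finset.mul_sum]
  rw [Finset.sum_comm]
  apply Finset.sum_congr rfl
  intro S _
  rw [lamt, Finset.sum_mul]
  apply Finset.sum_congr rfl
  intro j _
  ring

lemma Lfun_eq_zero (p : ℝ) (t : ℕ) (f : Polynomial ℝ)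
    (hdvd : (Polynomial.X (R := ℝ))^t ∣ f) : Lfun p t f = 0 := by
  rw [Lfun]
  apply Finset.sum_eq_zero
  intro j hj
  rw [Finset.mem_range] at hj
  rw [Polynomial.X_pow_dvd_iff.mp hdvd j hj, mul_zero]
noncomputable def chif (p : ℝ) {n : ℕ} (x : Finset (Fin n)) (i : Fin n) : ℝ :=
  (if i ∈ x then (1:ℝ) else 0) - p

noncomputable def eef (p : ℝ) {n : ℕ} (x y : Finset (Fin n)) (i : Fin n) : ℝ :=
  chif p x i * chif p y i / (p * (1-p))

noncomputable def muw (p : ℝ) {n : ℕ} (x : Finset (Fin n)) : ℝ :=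
  p ^ x.card * (1-p) ^ (n - x.card)

lemma muw_pos (p : ℝ) (hp : 0 < p) (hp1 : p < 1) {n : ℕ} (x : Finset (Fin n)) :
    0 < muw p x := by
  have : (0:ℝ) < 1 - p := by linarith
  rw [muw]; positivity

/-- divisibility of `PhiP` for intersecting pairs. -/
lemma X_pow_dvd_PhiP (p : ℝ) (hp : 0 < p) (hp1 : p < 1) {n : ℕ} (x y : Finset (Fin n)) :
    (Polynomial.X (R := ℝ))^((x ∩ y).card) ∣ PhiP p (eef p x y) := by
  have hq0 : (1:ℝ) - p ≠ 0 := by linarith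
  have hpne : p ≠ 0 := hp.ne'
  have hfac : ∀ i ∈ x ∩ y,
      (1 + Polynomial.C (eef p x y i) * (-(Polynomial.C (p/(1-p))) - Polynomial.X))
      = Polynomial.C (-(eef p x y i)) * Polynomial.X := by
    intro i hi
    rw [Finset.mem_inter] at hi
    have he : eef p x y i = (1-p)/p := by
      rw [eef, chif, chif, if_pos hi.1, if_pos hi.2]
      field_simp
    have hkey : 1 - eef p x y i * (p/(1-p)) = 0 := by
      rw [he]; field_simp
      ring
    have hrw : (1 : Polynomial ℝ) + Polynomial.C (eef p x y i) *
        (-(Polynomial.C (p/(1-p))) - Polynomial.X)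
        = Polynomial.C (1 - eef p x y i * (p/(1-p)))
          + Polynomial.C (-(eef p x y i)) * Polynomial.X := by
      rw [map_sub, map_mul, map_one, map_neg]
      ring
    rw [hrw, hkey, map_zero, zero_add]
  have h2 : ∏ i ∈ x ∩ y,
      (1 + Polynomial.C (eef p x y i) * (-(Polynomial.C (p/(1-p))) - Polynomial.X))
      = (∏ i ∈ x ∩ y, Polynomial.C (-(eef p x y i))) * (Polynomial.X (R := ℝ))^((x ∩ y).card) := by
    rw [Finset.prod_congr rfl hfac, Finset.prod_mul_distrib, Finset.prod_const]
  refine ⟨(∏ i ∈ x ∩ y, Polynomial.C (-(eef p x y i))) *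
      ∏ i ∈ Finset.univ \ (x ∩ y),
        (1 + Polynomial.C (eef p x y i) * (-(Polynomial.C (p/(1-p))) - Polynomial.X)), ?_⟩
  rw [PhiP, ← Finset.prod_sdiff (Finset.subset_univ (x ∩ y)), h2]
  ring

/-- Fourier coefficient of the family. -/
noncomputable def gS (p : ℝ) {n : ℕ} (F : Finset (Finset (Fin n))) (S : Finset (Fin n)) : ℝ :=
  ∑ x ∈ F, muw p x * ∏ i ∈ S, chif p x i

lemma sum_sum_eef (p : ℝ) (hp : 0 < p) (hp1 : p < 1) {n : ℕ} (F : Finset (Finset (Fin n)))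
    (S : Finset (Fin n)) :
    ∑ x ∈ F, ∑ y ∈ F, muw p x * muw p y * ∏ i ∈ S, eef p x y i
      = (gS p F S)^2 * ((p*(1-p))⁻¹)^S.card := by
  have hE : ∀ x y : Finset (Fin n), ∏ i ∈ S, eef p x y i
      = (∏ i ∈ S, chif p x i) * (∏ i ∈ S, chif p y i) * ((p*(1-p))⁻¹)^S.card := by
    intro x y
    rw [show (fun i => eef p x y i) = fun i => chif p x i * chif p y i * (p*(1-p))⁻¹ by
      funext i; rw [eef, div_eq_mul_inv]]
    rw [Finset.prod_mul_distrib, Finset.prod_mul_distrib, Finset.prod_const]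
  have h1 : ∀ x ∈ F, ∑ y ∈ F, muw p x * muw p y * ∏ i ∈ S, eef p x y i
      = (muw p x * ∏ i ∈ S, chif p x i) * gS p F S * ((p*(1-p))⁻¹)^S.card := by
    intro x _
    rw [gS, Finset.mul_sum, Finset.sum_mul]
    apply Finset.sum_congr rfl
    intro y _
    rw [hE]
    ring
  rw [Finset.sum_congr rfl h1, ← Finset.sum_mul, ← Finset.sum_mul, gS, sq]
lemma sum_powerset_eef (p : ℝ) (hp : 0 < p) (hp1 : p < 1) {n : ℕ} (x y : Finset (Fin n)) :
    ∑ S ∈ (Finset.univ : Finset (Fin n)).powerset, ∏ i ∈ S, eef p x y i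
      = if x = y then (muw p x)⁻¹ else 0 := by
  have hq0 : (1:ℝ) - p ≠ 0 := by linarith
  have hpne : p ≠ 0 := hp.ne'
  have h1 : ∏ i ∈ (Finset.univ : Finset (Fin n)), (eef p x y i + 1)
      = ∑ S ∈ (Finset.univ : Finset (Fin n)).powerset, ∏ i ∈ S, eef p x y i := by
    rw [Finset.prod_add]
    apply Finset.sum_congr rfl
    intro S _
    rw [Finset.prod_const_one, mul_one]
  rw [← h1]
  by_cases hxy : x = y
  · subst hxy
    rw [if_pos rfl]
    have h2 : ∀ i ∈ (Finset.univ : Finset (Fin n)),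
        eef p x x i + 1 = if i ∈ x then p⁻¹ else (1-p)⁻¹ := by
      intro i _
      rcases em (i ∈ x) with h | h
      · rw [eef, chif, if_pos h]
        field_simp
        rw [if_pos h]
        field_simp
        ring
      · rw [eef, chif, if_neg h]
        field_simp
        rw [if_neg h]
        field_simp
        ring
    rw [Finset.prod_congr rfl h2, ← Finset.prod_sdiff (Finset.subset_univ x)]
    have h3 : ∏ i ∈ Finset.univ \ x, (if i ∈ x then p⁻¹ else (1-p)⁻¹) = ((1-p)⁻¹)^(n - x.card) := by
      rw [Finset.prod_congr rfl (fun i hi => if_neg (Finset.mem_sdiff.mp hi).2),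
        Finset.prod_const, Finset.card_univ_diff, Fintype.card_fin]
    have h4 : ∏ i ∈ x, (if i ∈ x then p⁻¹ else (1-p)⁻¹) = (p⁻¹)^x.card := by
      rw [Finset.prod_congr rfl (fun i hi => if_pos hi), Finset.prod_const]
    rw [h3, h4, muw, mul_inv, inv_pow, inv_pow]
    ring
  · rw [if_neg hxy]
    have hne : ¬ (∀ a, a ∈ x ↔ a ∈ y) := fun h => hxy (Finset.ext h)
    rw [not_forall] at hne
    obtain ⟨i, hi⟩ := hne
    rw [iff_iff_implies_and_implies, not_and_or, Classical.not_imp, Classical.not_imp] at hi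
    apply Finset.prod_eq_zero (Finset.mem_univ i)
    rcases hi with ⟨h1', h2'⟩ | ⟨h1', h2'⟩
    · rw [eef, chif, chif, if_pos h1', if_neg h2']
      field_simp
      ring
    · rw [eef, chif, chif, if_neg h2', if_pos h1']
      field_simp
      ring

lemma parseval (p : ℝ) (hp : 0 < p) (hp1 : p < 1) {n : ℕ} (F : Finset (Finset (Fin n))) :
    ∑ S ∈ (Finset.univ : Finset (Fin n)).powerset, (gS p F S)^2 * ((p*(1-p))⁻¹)^S.card
      = ∑ x ∈ F, muw p x := by
  calc ∑ S ∈ (Finset.univ : Finset (Fin n)).powerset, (gS p F S)^2 * ((p*(1-p))⁻¹)^S.card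
      = ∑ S ∈ (Finset.univ : Finset (Fin n)).powerset,
          ∑ x ∈ F, ∑ y ∈ F, muw p x * muw p y * ∏ i ∈ S, eef p x y i :=
        Finset.sum_congr rfl (fun S _ => (sum_sum_eef p hp hp1 F S).symm)
    _ = ∑ x ∈ F, ∑ S ∈ (Finset.univ : Finset (Fin n)).powerset,
          ∑ y ∈ F, muw p x * muw p y * ∏ i ∈ S, eef p x y i := Finset.sum_comm
    _ = ∑ x ∈ F, ∑ y ∈ F, ∑ S ∈ (Finset.univ : Finset (Fin n)).powerset,
          muw p x * muw p y * ∏ i ∈ S, eef p x y i :=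
        Finset.sum_congr rfl (fun x _ => Finset.sum_comm)
    _ = ∑ x ∈ F, ∑ y ∈ F, muw p x * muw p y * (if x = y then (muw p x)⁻¹ else 0) := by
        apply Finset.sum_congr rfl; intro x _
        apply Finset.sum_congr rfl; intro y _
        rw [← Finset.mul_sum, sum_powerset_eef p hp hp1]
    _ = ∑ x ∈ F, muw p x := by
        apply Finset.sum_congr rfl
        intro x hx
        rw [Finset.sum_eq_single_of_mem x hx]
        · rw [if_pos rfl]
          field_simp
        · intro y _ hyx
          rw [if_neg (fun h => hyx h.symm), mul_zero]

/-- A family of subsets of `[n]` is `t`-intersecting if every two members intersect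
in at least `t` elements. -/
def Intersecting {n : ℕ} (t : ℕ) (F : Finset (Finset (Fin n))) : Prop :=
  ∀ J ∈ F, ∀ K ∈ F, t ≤ (J ∩ K).card

/-- The `p`-biased measure of a family of subsets of `[n]`. -/
noncomputable def biasedMeasure {n : ℕ} (p : ℝ) (F : Finset (Finset (Fin n))) : ℝ :=
  ∑ J ∈ F, p ^ J.card * (1 - p) ^ (n - J.card)

/-- Dinur–Safra / Friedgut: `t`-intersecting families have `p`-biased
measure at most `p^t` for `p < 1/(t+1)`. -/
theorem biasedMeasure_intersecting_le (n t : ℕ) (ht : 1 ≤ t)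
    (F : Finset (Finset (Fin n))) (hF : Intersecting t F)
    (p : ℝ) (hp : 0 < p) (hp' : p < 1 / (t + 1)) :
    biasedMeasure p F ≤ p ^ t := by
  have htR : (1:ℝ) ≤ (t:ℝ) := by exact_mod_cast ht
  have htpos : (0:ℝ) < (t:ℝ) + 1 := by linarith
  have hcond : p * ((t:ℝ)+1) ≤ 1 := le_of_lt ((lt_div_iff₀ htpos).mp hp')
  have hp1 : p < 1 := by nlinarith
  have hq0 : (0:ℝ) < 1 - p := by linarith
  have hptlt : p^t < 1 := pow_lt_one₀ hp.le hp1 (by omega)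
  have hptpos : 0 < p^t := pow_pos hp t
  have hcpos : 0 < p^t/(1-p^t) := div_pos hptpos (by linarith)
  have hzero : ∑ x ∈ F, ∑ y ∈ F, muw p x * muw p y * Lfun p t (PhiP p (eef p x y)) = 0 := by
    apply Finset.sum_eq_zero
    intro x hx
    apply Finset.sum_eq_zero
    intro y hy
    rw [Lfun_eq_zero p t _
      (dvd_trans (pow_dvd_pow _ (hF x hx y hy)) (X_pow_dvd_PhiP p hp hp1 x y)), mul_zero]
  have hexp : ∑ x ∈ F, ∑ y ∈ F, muw p x * muw p y * Lfun p t (PhiP p (eef p x y))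
      = ∑ S ∈ (Finset.univ : Finset (Fin n)).powerset,
          lamt p t S.card * ((gS p F S)^2 * ((p*(1-p))⁻¹)^S.card) := by
    calc ∑ x ∈ F, ∑ y ∈ F, muw p x * muw p y * Lfun p t (PhiP p (eef p x y))
        = ∑ x ∈ F, ∑ y ∈ F, ∑ S ∈ (Finset.univ : Finset (Fin n)).powerset,
            lamt p t S.card * (muw p x * muw p y * ∏ i ∈ S, eef p x y i) := by
          apply Finset.sum_congr rfl; intro x _
          apply Finset.sum_congr rfl; intro y _
          rw [Lfun_PhiP, Finset.mul_sum]
          apply Finset.sum_congr rfl; intro S _; ring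
      _ = ∑ x ∈ F, ∑ S ∈ (Finset.univ : Finset (Fin n)).powerset, ∑ y ∈ F,
            lamt p t S.card * (muw p x * muw p y * ∏ i ∈ S, eef p x y i) :=
          Finset.sum_congr rfl (fun x _ => Finset.sum_comm)
      _ = ∑ S ∈ (Finset.univ : Finset (Fin n)).powerset, ∑ x ∈ F, ∑ y ∈ F,
            lamt p t S.card * (muw p x * muw p y * ∏ i ∈ S, eef p x y i) := Finset.sum_comm
      _ = ∑ S ∈ (Finset.univ : Finset (Fin n)).powerset,
            lamt p t S.card * ((gS p F S)^2 * ((p*(1-p))⁻¹)^S.card) := by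
          apply Finset.sum_congr rfl; intro S _
          rw [← sum_sum_eef p hp hp1 F S, Finset.mul_sum]
          apply Finset.sum_congr rfl; intro x _
          rw [Finset.mul_sum]
  have hkey : ∑ S ∈ (Finset.univ : Finset (Fin n)).powerset,
      lamt p t S.card * ((gS p F S)^2 * ((p*(1-p))⁻¹)^S.card) = 0 := by
    rw [← hexp, hzero]
  have hμsum : biasedMeasure p F = ∑ x ∈ F, muw p x := rfl
  set μ := biasedMeasure p F with hμdef
  have hμnn : 0 ≤ μ := by
    rw [hμsum]
    exact Finset.sum_nonneg (fun x _ => (muw_pos p hp hp1 x).le)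
  have hgempty : gS p F ∅ = μ := by
    rw [gS, hμsum]
    exact Finset.sum_congr rfl (fun x _ => by simp)
  have hmem : (∅ : Finset (Fin n)) ∈ (Finset.univ : Finset (Fin n)).powerset :=
    Finset.empty_mem_powerset _
  have hsplit := Finset.add_sum_erase _
    (fun S => lamt p t S.card * ((gS p F S)^2 * ((p*(1-p))⁻¹)^S.card)) hmem
  have hsplit2 := Finset.add_sum_erase _
    (fun S => (gS p F S)^2 * ((p*(1-p))⁻¹)^S.card) hmem
  have hfempty : lamt p t (∅ : Finset (Fin n)).card *
      ((gS p F ∅)^2 * ((p*(1-p))⁻¹)^(∅ : Finset (Fin n)).card) = μ^2 := by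
    rw [Finset.card_empty, lamt_zero p t ht (ne_of_lt hptlt), hgempty, pow_zero, mul_one, one_mul]
  have hwempty : (gS p F ∅)^2 * ((p*(1-p))⁻¹)^(∅ : Finset (Fin n)).card = μ^2 := by
    rw [hgempty, Finset.card_empty, pow_zero, mul_one]
  have hparse := parseval p hp hp1 F
  have herase_w : ∑ S ∈ ((Finset.univ : Finset (Fin n)).powerset).erase ∅,
      (gS p F S)^2 * ((p*(1-p))⁻¹)^S.card = μ - μ^2 := by
    have h2 : (gS p F ∅)^2 * ((p*(1-p))⁻¹)^(∅ : Finset (Fin n)).card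
        + ∑ S ∈ ((Finset.univ : Finset (Fin n)).powerset).erase ∅,
          (gS p F S)^2 * ((p*(1-p))⁻¹)^S.card = μ := by
      rw [hsplit2, hparse, hμsum]
    rw [hwempty] at h2
    linarith
  have hbound : ∀ S ∈ ((Finset.univ : Finset (Fin n)).powerset).erase ∅,
      -(p^t/(1-p^t)) * ((gS p F S)^2 * ((p*(1-p))⁻¹)^S.card)
        ≤ lamt p t S.card * ((gS p F S)^2 * ((p*(1-p))⁻¹)^S.card) := by
    intro S hS
    have hSne : S ≠ ∅ := (Finset.mem_erase.mp hS).1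
    have hScard : 1 ≤ S.card := Finset.card_pos.mpr (Finset.nonempty_iff_ne_empty.mpr hSne)
    apply mul_le_mul_of_nonneg_right (lamt_ge p t ht hp hcond S.card hScard)
    have h3 : (0:ℝ) < p * (1-p) := by positivity
    positivity
  have hsum_bound : -(p^t/(1-p^t)) * (μ - μ^2)
      ≤ ∑ S ∈ ((Finset.univ : Finset (Fin n)).powerset).erase ∅,
          lamt p t S.card * ((gS p F S)^2 * ((p*(1-p))⁻¹)^S.card) := by
    rw [← herase_w, Finset.mul_sum]
    exact Finset.sum_le_sum hbound
  have h0 : μ^2 + ∑ S ∈ ((Finset.univ : Finset (Fin n)).powerset).erase ∅,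
      lamt p t S.card * ((gS p F S)^2 * ((p*(1-p))⁻¹)^S.card) = 0 := by
    have h4 := hsplit
    rw [hkey] at h4
    rw [← hfempty]
    exact h4
  have hfinal : μ^2 - (p^t/(1-p^t)) * (μ - μ^2) ≤ 0 := by linarith
  have hmul : μ^2 * (1-p^t) ≤ p^t * (μ - μ^2) := by
    have h5 : μ^2 ≤ (p^t/(1-p^t)) * (μ - μ^2) := by linarith
    have h6 := mul_le_mul_of_nonneg_right h5 (show (0:ℝ) ≤ 1-p^t by linarith)
    calc μ^2 * (1-p^t) ≤ (p^t/(1-p^t)) * (μ - μ^2) * (1-p^t) := h6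
      _ = p^t * (μ - μ^2) := by
          have hne : (1:ℝ)-p^t ≠ 0 := by linarith
          field_simp
  have hμ2 : μ^2 ≤ p^t * μ := by nlinarith
  by_contra hcon
  push_neg at hcon
  have hμpos : 0 < μ := lt_trans hptpos hcon
  nlinarith [mul_lt_mul_of_pos_left hcon hμpos]
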